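/- The face of the permutahedron labeled by the ordered partition [B_2,...,B_k,B_1] is the translate of the face labeled [B_1,B_2,...,B_k] by the vector Σ_{b∈B_1} w_b, where w_b = (d+1)e_b − Σ_j e_j. Concretely: the set of permutation vectors x of [d+1] with {x_a : a ∈ B_i} = {b_{i-1}+1,...,b_i} for all i (where b_i = |B_1|+...+|B_i|), translated by Σ_{b∈B_1} w_b, equals the set of permutation vectors y of [d+1] with {y_a : a ∈ B_{i+1 mod k}} being the appropriate consecutive intervals for the rotated partition. -/

import Mathlib

open Fin.NatCast

lemma auxSub (d n : ℕ) (hn : n ≤ d + 1) (t : Fin (d + 1)) :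
    (((t - (n : Fin (d + 1))) : Fin (d + 1)).val : ℤ) =
      if (t.val : ℕ) < n then (t.val : ℤ) + (d + 1) - n else (t.val : ℤ) - n := by
  have h1 : ((t - (n : Fin (d + 1))).val)
      = if t.val < n then t.val + (d + 1) - n else t.val - n := by
    rw [Fin.sub_def]
    simp only [Fin.val_natCast]
    rcases Nat.lt_or_ge n (d + 1) with h | h
    · rw [Nat.mod_eq_of_lt h]
      rcases Nat.lt_or_ge t.val n with h2 | h2
      · rw [if_pos h2, Nat.mod_eq_of_lt (by omega)]
        omega
      · rw [if_neg (by omega)]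
        have he : (d + 1) - n + t.val = (t.val - n) + (d + 1) := by omega
        rw [he, Nat.add_mod_right, Nat.mod_eq_of_lt (by omega)]
    · have hn' : n = d + 1 := by omega
      subst hn'
      rw [Nat.mod_self]
      have he : (d + 1) - 0 + t.val = t.val + (d + 1) := by omega
      rw [he, Nat.add_mod_right, Nat.mod_eq_of_lt t.isLt, if_pos t.isLt]
      omega
  rw [h1]
  split_ifs <;> omega

lemma auxAdd (d n : ℕ) (hn : n ≤ d + 1) (t : Fin (d + 1)) :
    (((t + (n : Fin (d + 1))) : Fin (d + 1)).val : ℤ) =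
      if d + 1 ≤ (t.val : ℕ) + n then (t.val : ℤ) + n - (d + 1) else (t.val : ℤ) + n := by
  have h1 : ((t + (n : Fin (d + 1))).val)
      = if d + 1 ≤ t.val + n then t.val + n - (d + 1) else t.val + n := by
    rw [Fin.add_def]
    simp only [Fin.val_natCast]
    rcases Nat.lt_or_ge n (d + 1) with h | h
    · rw [Nat.mod_eq_of_lt h]
      rcases Nat.lt_or_ge (t.val + n) (d + 1) with h2 | h2
      · rw [if_neg (by omega), Nat.mod_eq_of_lt (by omega)]
      · rw [if_pos (by omega)]
        have he : t.val + n = (t.val + n - (d + 1)) + (d + 1) := by omega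
        rw [he, Nat.add_mod_right, Nat.mod_eq_of_lt (by omega)]
        omega
    · have hn' : n = d + 1 := by omega
      subst hn'
      rw [Nat.mod_self, Nat.add_zero, Nat.mod_eq_of_lt t.isLt, if_pos (by omega)]
      omega
  rw [h1]
  split_ifs <;> omega

lemma sumFilterLt {M : Type*} [AddCommMonoid M] (m : ℕ) (i : Fin (m + 1)) (f : Fin (m + 1) → M) :
    ∑ j ∈ Finset.univ.filter (fun j => j < i), f j
      = ∑ t ∈ Finset.range i.val, f (t : Fin (m + 1)) := by
  apply Finset.sum_nbij' (fun j => (j : Fin (m+1)).val) (fun t => (t : Fin (m + 1)))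
  · intro a ha
    simp only [Finset.mem_filter, Finset.mem_univ, true_and] at ha
    simp only [Finset.mem_range]
    exact ha
  · intro a ha
    simp only [Finset.mem_range] at ha
    simp only [Finset.mem_filter, Finset.mem_univ, true_and]
    have hlt : a < m + 1 := by omega
    rw [Fin.lt_iff_val_lt_val, Fin.val_natCast, Nat.mod_eq_of_lt hlt]
    exact ha
  · intro a ha
    exact Fin.cast_val_eq_self a
  · intro a ha
    simp only [Finset.mem_range] at ha
    rw [Fin.val_natCast, Nat.mod_eq_of_lt (by omega)]
  · intro a ha
    rw [Fin.cast_val_eq_self a]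

lemma imageShift {α : Type*} [DecidableEq α] (S : Finset α) (u v : α → ℤ) (c p q : ℤ)
    (hv : ∀ a ∈ S, v a = c) (h : S.image u = Finset.Icc p q) :
    S.image (u + v) = Finset.Icc (p + c) (q + c) := by
  have h1 : S.image (u + v) = S.image (fun a => u a + c) :=
    Finset.image_congr (fun a ha => by rw [Pi.add_apply, hv a ha])
  have h2 : S.image (fun a => u a + c) = (S.image u).image (· + c) := by
    rw [Finset.image_image]; rfl
  rw [h1, h2, h, Finset.image_add_right_Icc]

lemma memIffOfImage {α : Type*} [DecidableEq α] (S : Finset α) (u : α → ℤ)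
    (hu : Function.Injective u) (I : Finset ℤ) (h : S.image u = I) (a : α) :
    a ∈ S ↔ u a ∈ I := by
  constructor
  · intro ha; rw [← h]; exact Finset.mem_image_of_mem _ ha
  · intro ha
    rw [← h] at ha
    obtain ⟨b, hb, he⟩ := Finset.mem_image.mp ha
    rwa [← hu he]



/-- The face of the permutahedral tiling labeled by an ordered set partition
`C` of `Fin (d+1)`: the set of permutation vectors `x` such that the image of
each block `C i` is the consecutive interval of values determined by the sizes
of the preceding blocks. -/
def orderedPartitionFace (d m : ℕ) (C : Fin (m + 1) → Finset (Fin (d + 1))) :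
    Set (Fin (d + 1) → ℤ) :=
  {x | (∃ σ : Equiv.Perm (Fin (d + 1)), ∀ a, x a = ((σ a : ℕ) : ℤ) + 1) ∧
    ∀ i, (C i).image x =
      Finset.Icc ((∑ j ∈ Finset.univ.filter (fun j => j < i), ((C j).card : ℤ)) + 1)
        ((∑ j ∈ Finset.univ.filter (fun j => j < i), ((C j).card : ℤ)) + (C i).card)}

/-- First Rotation Lemma: the face of the rotated ordered partition
`[B₂,…,B_k,B₁]` is the translate of the face of `[B₁,…,B_k]` by `∑_{b ∈ B₁} w_b`. -/
theorem face_rotation (d m : ℕ) (hd : 1 ≤ d)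
    (B : Fin (m + 1) → Finset (Fin (d + 1)))
    (hdisj : ∀ i j, i ≠ j → Disjoint (B i) (B j))
    (hne : ∀ i, (B i).Nonempty)
    (hcover : ∀ a, ∃ i, a ∈ B i)
    (w : Fin (d + 1) → Fin (d + 1) → ℤ)
    (hw : ∀ b j, w b j = if j = b then (d : ℤ) else -1) :
    orderedPartitionFace d m (fun i => B (i + 1)) =
      (fun x => x + ∑ b ∈ B 0, w b) '' orderedPartitionFace d m B := by
  classical
  set V : Fin (d + 1) → ℤ := ∑ b ∈ B 0, w b with hVdef
  have hV : ∀ j, V j = if j ∈ B 0 then (d : ℤ) + 1 - (B 0).card else -((B 0).card : ℤ) := by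
    intro j
    have h0 : V j = ∑ b ∈ B 0, w b j := by rw [hVdef]; exact Finset.sum_apply j (B 0) w
    rw [h0]
    have h1 : ∀ b ∈ B 0, w b j = (if j = b then (d : ℤ) + 1 else 0) - 1 := by
      intro b _; rw [hw]; split_ifs <;> ring
    rw [Finset.sum_congr rfl h1, Finset.sum_sub_distrib, Finset.sum_ite_eq,
      Finset.sum_const, nsmul_eq_mul, mul_one]
    split_ifs <;> ring
  have hn₀le : (B 0).card ≤ d + 1 := by
    simpa using Finset.card_le_univ (B 0)
  have htot : ∑ j : Fin (m + 1), ((B j).card : ℤ) = (d : ℤ) + 1 := by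
    have h1 : Finset.univ.biUnion B = Finset.univ := by
      apply Finset.eq_univ_iff_forall.mpr
      intro a; obtain ⟨i, hi⟩ := hcover a
      exact Finset.mem_biUnion.mpr ⟨i, Finset.mem_univ i, hi⟩
    have h2 : ∑ j : Fin (m + 1), (B j).card = d + 1 := by
      rw [← Finset.card_biUnion (fun i _ j _ hij => hdisj i j hij), h1]
      simp
    exact_mod_cast congrArg (Nat.cast : ℕ → ℤ) h2
  set g : ℕ → ℤ := fun t => ((B ((t : ℕ) : Fin (m + 1))).card : ℤ) with hgdef
  have hg0 : g 0 = ((B 0).card : ℤ) := by simp [hgdef]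
  have hgsum : ∑ t ∈ Finset.range (m + 1), g t = (d : ℤ) + 1 := by
    rw [← Fin.sum_univ_eq_sum_range g (m + 1)]
    have he : ∀ i : Fin (m + 1), g i.val = ((B i).card : ℤ) := fun i => by
      simp [hgdef, Fin.cast_val_eq_self]
    rw [Finset.sum_congr rfl (fun i _ => he i)]
    exact htot
  have hS : ∀ i : Fin (m + 1),
      (∑ j ∈ Finset.univ.filter (fun j => j < i), ((B j).card : ℤ))
        = ∑ t ∈ Finset.range i.val, g t := by
    intro i
    rw [sumFilterLt m i (fun j => ((B j).card : ℤ))]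
  have hT : ∀ i : Fin (m + 1),
      (∑ j ∈ Finset.univ.filter (fun j => j < i), ((B (j + 1)).card : ℤ))
        = ∑ t ∈ Finset.range i.val, g (t + 1) := by
    intro i
    rw [sumFilterLt m i (fun j => ((B (j + 1)).card : ℤ))]
    apply Finset.sum_congr rfl
    intro t _
    simp [hgdef, Nat.cast_add, Nat.cast_one]
  have hshift : ∀ k : ℕ, ∑ t ∈ Finset.range k, g (t + 1)
      = (∑ t ∈ Finset.range (k + 1), g t) - g 0 := by
    intro k; rw [Finset.sum_range_succ']; ring
  have hS0 : (∑ j ∈ Finset.univ.filter (fun j => j < (0 : Fin (m + 1))), ((B j).card : ℤ)) = 0 := by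
    rw [hS 0]; simp
  have hTlast : (∑ j ∈ Finset.univ.filter (fun j => j < Fin.last m), ((B (j + 1)).card : ℤ))
      = (d : ℤ) + 1 - (B 0).card := by
    rw [hT, Fin.val_last, hshift m, hgsum, hg0]
  have hmemuniq : ∀ (a : Fin (d + 1)) (i j : Fin (m + 1)), a ∈ B i → a ∈ B j → i = j := by
    intro a i j hi hj
    by_contra h
    exact Finset.disjoint_left.mp (hdisj i j h) hi hj
  apply Set.ext
  intro y
  simp only [orderedPartitionFace, Set.mem_setOf_eq, Set.mem_image]
  constructor
  · rintro ⟨⟨τ, hτ⟩, hblocks⟩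
    have hyinj : Function.Injective y := by
      intro a b h
      rw [hτ a, hτ b] at h
      have h3 : (τ a : ℕ) = (τ b : ℕ) := by omega
      exact τ.injective (Fin.val_injective h3)
    have hblock0' : (B 0).image y
        = Finset.Icc (((d : ℤ) + 1 - (B 0).card) + 1) (((d : ℤ) + 1 - (B 0).card) + (B 0).card) := by
      have h := hblocks (Fin.last m)
      rw [Fin.last_add_one, hTlast] at h
      exact h
    have hmem0' : ∀ a, a ∈ B 0 ↔ d + 1 ≤ (τ a : ℕ) + (B 0).card := by
      intro a
      rw [memIffOfImage (B 0) y hyinj _ hblock0' a, Finset.mem_Icc, hτ a]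
      omega
    refine ⟨y + (-V), ⟨⟨τ.trans (Equiv.addRight (((B 0).card : ℕ) : Fin (d + 1))), ?_⟩, ?_⟩, ?_⟩
    · intro a
      have hadd := auxAdd d (B 0).card hn₀le (τ a)
      simp only [Pi.add_apply, Pi.neg_apply, Equiv.trans_apply, Equiv.coe_addRight]
      rw [hτ a, hV a, hadd]
      by_cases hA : a ∈ B 0
      · rw [if_pos hA, if_pos ((hmem0' a).mp hA)]; ring
      · rw [if_neg hA, if_neg (fun hc => hA ((hmem0' a).mpr hc))]; ring
    · intro i
      by_cases hi : i = 0
      · subst hi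
        have hVa : ∀ a ∈ B 0, (-V) a = ((B 0).card : ℤ) - ((d : ℤ) + 1) := by
          intro a ha
          rw [Pi.neg_apply, hV a, if_pos ha]; ring
        have himg := imageShift (B 0) y (-V) _ _ _ hVa hblock0'
        rw [hS0, himg]
        congr 1 <;> ring
      · set j : Fin (m + 1) := i - 1 with hj
        have hji : j + 1 = i := by rw [hj]; abel
        have hjne : j ≠ Fin.last m := by
          intro h
          apply hi
          rw [← hji, h, Fin.last_add_one]
        have hjval : j.val + 1 = i.val := by
          rw [← hji]
          exact (Fin.val_add_one_of_lt (Fin.lt_last_iff_ne_last.mpr hjne)).symm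
        have hTj : (∑ j' ∈ Finset.univ.filter (fun j' => j' < j), ((B (j' + 1)).card : ℤ))
            = (∑ j' ∈ Finset.univ.filter (fun j' => j' < i), ((B j').card : ℤ)) - (B 0).card := by
          rw [hT j, hS i, ← hjval, hshift, hg0]
        have hVa : ∀ a ∈ B i, (-V) a = ((B 0).card : ℤ) := by
          intro a ha
          rw [Pi.neg_apply, hV a, if_neg (fun h0 => hi (hmemuniq a _ _ ha h0))]
          ring
        have hb := hblocks j
        rw [hji, hTj] at hb
        have himg := imageShift (B i) y (-V) _ _ _ hVa hb
        rw [himg]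
        congr 1 <;> ring
    · show (y + -V) + V = y
      exact neg_add_cancel_right y V
  · rintro ⟨x, ⟨⟨σ, hσ⟩, hblocks⟩, rfl⟩
    have hxinj : Function.Injective x := by
      intro a b h
      rw [hσ a, hσ b] at h
      have h3 : (σ a : ℕ) = (σ b : ℕ) := by omega
      exact σ.injective (Fin.val_injective h3)
    have hblock0 : (B 0).image x = Finset.Icc 1 ((B 0).card : ℤ) := by
      have h := hblocks 0
      rw [hS0] at h
      simpa using h
    have hmem0 : ∀ a, a ∈ B 0 ↔ (σ a : ℕ) < (B 0).card := by
      intro a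
      rw [memIffOfImage (B 0) x hxinj _ hblock0 a, Finset.mem_Icc, hσ a]
      omega
    refine ⟨⟨σ.trans (Equiv.subRight (((B 0).card : ℕ) : Fin (d + 1))), ?_⟩, ?_⟩
    · intro a
      have hsub := auxSub d (B 0).card hn₀le (σ a)
      simp only [Pi.add_apply, Equiv.trans_apply, Equiv.subRight_apply]
      rw [hσ a, hV a, hsub]
      by_cases hA : a ∈ B 0
      · rw [if_pos hA, if_pos ((hmem0 a).mp hA)]; ring
      · rw [if_neg hA, if_neg (fun hc => hA ((hmem0 a).mpr hc))]; ring
    · intro i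
      by_cases hi : i = Fin.last m
      · subst hi
        rw [Fin.last_add_one, hTlast]
        have hVa : ∀ a ∈ B 0, V a = (d : ℤ) + 1 - (B 0).card := by
          intro a ha; rw [hV a, if_pos ha]
        have himg := imageShift (B 0) x V _ _ _ hVa hblock0
        rw [himg]
        congr 1 <;> ring
      · have hlt : i < Fin.last m := Fin.lt_last_iff_ne_last.mpr hi
        have hval : (i + 1).val = i.val + 1 := Fin.val_add_one_of_lt hlt
        have hne0 : i + 1 ≠ 0 := by
          intro h
          have := congrArg Fin.val h
          rw [hval] at this
          simp at this
        have hTi : (∑ j ∈ Finset.univ.filter (fun j => j < i), ((B (j + 1)).card : ℤ))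
            = (∑ j ∈ Finset.univ.filter (fun j => j < i + 1), ((B j).card : ℤ)) - (B 0).card := by
          rw [hT i, hS (i + 1), hval, hshift, hg0]
        have hVa : ∀ a ∈ B (i + 1), V a = -((B 0).card : ℤ) := by
          intro a ha
          rw [hV a, if_neg (fun h0 => hne0 (hmemuniq a _ _ ha h0))]
        have himg := imageShift (B (i + 1)) x V _ _ _ hVa (hblocks (i + 1))
        rw [himg, hTi]
        congr 1 <;> ring
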